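/- Type preservation of the selective CPS translation: (1) if Γ ⊢p e : τ ⇝p e′ in the fine-grained λF, then ⟦Γ⟧ ⊢C e′ : ⟦τ⟧ in λC; and (2) if Γ ⊢ e : τ @ μα α / μβ β ⇝ e′ in the fine-grained λF, then ⟦Γ⟧ ⊢C e′ : (⟦τ⟧ → ⟦μα⟧ → ⟦α⟧) → ⟦μβ⟧ → ⟦β⟧ in λC. -/

import Mathlib

namespace LambdaF

/-! ## Syntax and operational semantics of λF -/

/-- λF expressions.  A constant `const ι n` is the `n`-th constant of base type `ι`. -/
inductive Tm : Type where
  | const : Nat → Nat → Tm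
  | var : String → Tm
  | lam : String → Tm → Tm
  | app : Tm → Tm → Tm
  | control : String → Tm → Tm
  | prompt : Tm → Tm

/-- Values `v ::= c | x | λx.e`. -/
inductive IsVal : Tm → Prop where
  | const (ι n : Nat) : IsVal (.const ι n)
  | var (x : String) : IsVal (.var x)
  | lam (x : String) (e : Tm) : IsVal (.lam x e)

/-- Substitution `e[x := v]`. -/
def subst : Tm → String → Tm → Tm
  | .const ι n, _, _ => .const ι n
  | .var y, x, v => if y = x then v else .var y
  | .lam y e, x, v => if y = x then .lam y e else .lam y (subst e x v)
  | .app e₁ e₂, x, v => .app (subst e₁ x v) (subst e₂ x v)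
  | .control k e, x, v => if k = x then .control k e else .control k (subst e x v)
  | .prompt e, x, v => .prompt (subst e x v)

/-- All variable names occurring in a term (free or bound). -/
def Tm.vars : Tm → List String
  | .const _ _ => []
  | .var y => [y]
  | .lam y e => y :: e.vars
  | .app e₁ e₂ => e₁.vars ++ e₂.vars
  | .control k e => k :: e.vars
  | .prompt e => e.vars

/-- Pure evaluation contexts `F ::= [] | F e | v F`. -/
inductive PCtx : Type where
  | hole : PCtx
  | appL : PCtx → Tm → PCtx
  | appR : Tm → PCtx → PCtx

/-- Plugging an expression into a pure context. -/
def PCtx.plug : PCtx → Tm → Tm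
  | .hole, e => e
  | .appL P e₂, e => .app (P.plug e) e₂
  | .appR v P, e => .app v (P.plug e)

/-- Well-formedness of pure contexts: in `v F`, `v` is a value. -/
inductive PCtx.Wf : PCtx → Prop where
  | hole : PCtx.Wf .hole
  | appL (P : PCtx) (e : Tm) : PCtx.Wf P → PCtx.Wf (.appL P e)
  | appR (v : Tm) (P : PCtx) : IsVal v → PCtx.Wf P → PCtx.Wf (.appR v P)

/-- All variable names occurring in a pure context. -/
def PCtx.vars : PCtx → List String
  | .hole => []
  | .appL P e => P.vars ++ e.vars
  | .appR v P => v.vars ++ P.vars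

/-- General evaluation contexts `E ::= [] | E e | v E | ⟨E⟩`. -/
inductive ECtx : Type where
  | hole : ECtx
  | appL : ECtx → Tm → ECtx
  | appR : Tm → ECtx → ECtx
  | prompt : ECtx → ECtx

/-- Plugging an expression into a general context. -/
def ECtx.plug : ECtx → Tm → Tm
  | .hole, e => e
  | .appL E e₂, e => .app (E.plug e) e₂
  | .appR v E, e => .app v (E.plug e)
  | .prompt E, e => .prompt (E.plug e)

/-- Well-formedness of general contexts: in `v E`, `v` is a value. -/
inductive ECtx.Wf : ECtx → Prop where
  | hole : ECtx.Wf .hole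
  | appL (E : ECtx) (e : Tm) : ECtx.Wf E → ECtx.Wf (.appL E e)
  | appR (v : Tm) (E : ECtx) : IsVal v → ECtx.Wf E → ECtx.Wf (.appR v E)
  | prompt (E : ECtx) : ECtx.Wf E → ECtx.Wf (.prompt E)

/-- Reduction of λF. -/
inductive Step : Tm → Tm → Prop where
  | beta (E : ECtx) (x : String) (e v : Tm) :
      E.Wf → IsVal v →
      Step (E.plug (.app (.lam x e) v)) (E.plug (subst e x v))
  | control (E : ECtx) (P : PCtx) (k : String) (e : Tm) (x : String) :
      E.Wf → P.Wf → x ∉ P.vars →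
      Step (E.plug (.prompt (P.plug (.control k e))))
           (E.plug (.prompt (subst e k (.lam x (P.plug (.var x))))))
  | prompt (E : ECtx) (v : Tm) :
      E.Wf → IsVal v →
      Step (E.plug (.prompt v)) (E.plug v)

/-- Reflexive transitive closure of reduction. -/
def Steps : Tm → Tm → Prop := Relation.ReflTransGen Step

/-! ## Types and the fine-grained type system of λF -/

mutual
/-- Fine-grained λF expression types
    `τ ::= ι | (τ₁ → τ₂ @ μα α μβ β) | (τ₁ →p τ₂)`. -/
inductive FTy : Type where
  | base : Nat → FTy
  | arrow : FTy → FTy → FTr → FTy → FTr → FTy → FTy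
  | parrow : FTy → FTy → FTy

/-- Fine-grained λF trail types `μ ::= • | (τ ⇒⟨μ⟩ τ′)`. -/
inductive FTr : Type where
  | empty : FTr
  | cons : FTy → FTr → FTy → FTr
end

/-- `id-cont-type τ μ τ′`. -/
def FIdContType : FTy → FTr → FTy → Prop
  | τ, .empty, τ' => τ = τ'
  | τ, .cons τ₁ μ₁ τ₁', τ' => τ = τ₁ ∧ τ' = τ₁' ∧ μ₁ = .empty

/-- `compatible μ₁ μ₂ μ₃`. -/
inductive FCompatible : FTr → FTr → FTr → Prop where
  | empty (μ : FTr) : FCompatible .empty μ μ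
  | consEmpty (τ₁ : FTy) (μ₁ : FTr) (τ₁' : FTy) :
      FCompatible (.cons τ₁ μ₁ τ₁') .empty (.cons τ₁ μ₁ τ₁')
  | consCons (τ₁ : FTy) (μ₁ : FTr) (τ₁' : FTy) (μ₂ μ₃ : FTr) :
      FCompatible μ₂ μ₃ μ₁ →
      FCompatible (.cons τ₁ μ₁ τ₁') μ₂ (.cons τ₁ μ₃ τ₁')

/-- Fine-grained typing contexts. -/
abbrev FCtx := List (String × FTy)

/-- Context lookup (with shadowing). -/
inductive FLookup : FCtx → String → FTy → Prop where
  | here (Γ : FCtx) (x : String) (τ : FTy) : FLookup ((x, τ) :: Γ) x τ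
  | there (Γ : FCtx) (x y : String) (τ τ' : FTy) :
      x ≠ y → FLookup Γ x τ → FLookup ((y, τ') :: Γ) x τ

mutual
/-- The pure judgment `Γ ⊢p e : τ` of the fine-grained λF. -/
inductive HasTypeP : FCtx → Tm → FTy → Prop where
  | const (Γ : FCtx) (ι n : Nat) : HasTypeP Γ (.const ι n) (.base ι)
  | var (Γ : FCtx) (x : String) (τ : FTy) :
      FLookup Γ x τ → HasTypeP Γ (.var x) τ
  | pabs (Γ : FCtx) (x : String) (e : Tm) (τ₁ τ₂ : FTy) :
      HasTypeP ((x, τ₁) :: Γ) e τ₂ →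
      HasTypeP Γ (.lam x e) (.parrow τ₁ τ₂)
  | iabs (Γ : FCtx) (x : String) (e : Tm) (τ₁ τ₂ : FTy) (μα : FTr) (α : FTy)
      (μβ : FTr) (β : FTy) :
      HasTypeI ((x, τ₁) :: Γ) e τ₂ μα α μβ β →
      HasTypeP Γ (.lam x e) (.arrow τ₁ τ₂ μα α μβ β)
  | papp (Γ : FCtx) (e₁ e₂ : Tm) (τ₁ τ₂ : FTy) :
      HasTypeP Γ e₁ (.parrow τ₁ τ₂) → HasTypeP Γ e₂ τ₁ →
      HasTypeP Γ (.app e₁ e₂) τ₂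
  | pprompt (Γ : FCtx) (e : Tm) (τ : FTy) :
      HasTypeP Γ e τ → HasTypeP Γ (.prompt e) τ
  | iprompt (Γ : FCtx) (e : Tm) (β : FTy) (μi : FTr) (β' τ : FTy) :
      HasTypeI Γ e β μi β' .empty τ →
      FIdContType β μi β' →
      HasTypeP Γ (.prompt e) τ

/-- The impure judgment `Γ ⊢ e : τ @ μα α / μβ β` of the fine-grained λF. -/
inductive HasTypeI : FCtx → Tm → FTy → FTr → FTy → FTr → FTy → Prop where
  | piapp (Γ : FCtx) (e₁ e₂ : Tm) (τ₁ τ₂ : FTy) (μα : FTr) (α : FTy)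
      (μβ : FTr) (β : FTy) (μγ : FTr) (γ : FTy) :
      HasTypeI Γ e₁ (.parrow τ₁ τ₂) μα α μβ β →
      HasTypeI Γ e₂ τ₁ μγ γ μα α →
      HasTypeI Γ (.app e₁ e₂) τ₂ μγ γ μβ β
  | iapp (Γ : FCtx) (e₁ e₂ : Tm) (τ₁ τ₂ : FTy) (μα : FTr) (α : FTy)
      (μβ : FTr) (β : FTy) (μγ : FTr) (γ : FTy) (μδ : FTr) (δ : FTy) :
      HasTypeI Γ e₁ (.arrow τ₁ τ₂ μα α μβ β) μγ γ μδ δ →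
      HasTypeI Γ e₂ τ₁ μβ β μγ γ →
      HasTypeI Γ (.app e₁ e₂) τ₂ μα α μδ δ
  | pcontrol (Γ : FCtx) (k : String) (e : Tm) (τ α γ : FTy) (μi : FTr)
      (γ' β : FTy) (μα : FTr) :
      HasTypeI ((k, .parrow τ α) :: Γ) e γ μi γ' .empty β →
      FIdContType γ μi γ' →
      HasTypeI Γ (.control k e) τ μα α μα β
  | icontrol (Γ : FCtx) (k : String) (e : Tm) (τ τ₁ : FTy) (μ₁ : FTr)
      (τ₁' : FTy) (μ₂ μ₀ : FTr) (α β γ : FTy) (μi : FTr) (γ' : FTy) (μα μβ : FTr) :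
      HasTypeI ((k, .arrow τ τ₁ μ₁ τ₁' μ₂ α) :: Γ) e γ μi γ' .empty β →
      FIdContType γ μi γ' →
      FCompatible (.cons τ₁ μ₁ τ₁') μ₂ μ₀ →
      FCompatible μβ μ₀ μα →
      HasTypeI Γ (.control k e) τ μα α μβ β
  | exp (Γ : FCtx) (e : Tm) (τ : FTy) (μα : FTr) (α : FTy) :
      HasTypeP Γ e τ →
      HasTypeI Γ e τ μα α μα α
end

/-! ## The target calculus λC -/

/-- λC variables: either a λF source variable, or a generated variable
    identified by a pair of numbers (level, slot). -/
abbrev CVar := Sum String (Nat × Nat)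

/-- The generated λC variable at level `n`, slot `i`. -/
def gv (n i : Nat) : CVar := Sum.inr (n, i)

/-- λC expressions, with a unit value `()` and a trail-case construct
    `case t of () → e₁ | k → e₂` (binding `k` in `e₂`). -/
inductive CTm : Type where
  | const : Nat → Nat → CTm
  | cvar : CVar → CTm
  | clam : CVar → CTm → CTm
  | capp : CTm → CTm → CTm
  | unit : CTm
  | ccase : CTm → CTm → CVar → CTm → CTm

/-- Substitution on λC expressions. -/
def substC : CTm → CVar → CTm → CTm
  | .const ι n, _, _ => .const ι n
  | .cvar y, x, v => if y = x then v else .cvar y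
  | .clam y e, x, v => if y = x then .clam y e else .clam y (substC e x v)
  | .capp e₁ e₂, x, v => .capp (substC e₁ x v) (substC e₂ x v)
  | .unit, _, _ => .unit
  | .ccase t e₁ k e₂, x, v =>
      .ccase (substC t x v) (substC e₁ x v) k (if k = x then e₂ else substC e₂ x v)

/-- λC types `σ ::= ι | σ → σ | •`. -/
inductive CTy : Type where
  | base : Nat → CTy
  | arrow : CTy → CTy → CTy
  | unit : CTy

/-- λC typing contexts. -/
abbrev CCtx := List (CVar × CTy)

/-- λC context lookup (with shadowing). -/
inductive CLookup : CCtx → CVar → CTy → Prop where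
  | here (Γ : CCtx) (x : CVar) (σ : CTy) : CLookup ((x, σ) :: Γ) x σ
  | there (Γ : CCtx) (x y : CVar) (σ σ' : CTy) :
      x ≠ y → CLookup Γ x σ → CLookup ((y, σ') :: Γ) x σ

/-- The typing judgment `Γ ⊢C e : σ` of λC.  In the `ccase` rule, the first
    branch is typed under the equality assumption that the scrutinee's type is
    `•`, and the second branch under the assumptions that `k` has the
    scrutinee's type and that this type is a function type. -/
inductive HasTypeC : CCtx → CTm → CTy → Prop where
  | const (Γ : CCtx) (ι n : Nat) : HasTypeC Γ (.const ι n) (.base ι)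
  | var (Γ : CCtx) (x : CVar) (σ : CTy) :
      CLookup Γ x σ → HasTypeC Γ (.cvar x) σ
  | lam (Γ : CCtx) (x : CVar) (e : CTm) (σ₁ σ₂ : CTy) :
      HasTypeC ((x, σ₁) :: Γ) e σ₂ →
      HasTypeC Γ (.clam x e) (.arrow σ₁ σ₂)
  | app (Γ : CCtx) (e₁ e₂ : CTm) (σ₁ σ₂ : CTy) :
      HasTypeC Γ e₁ (.arrow σ₁ σ₂) → HasTypeC Γ e₂ σ₁ →
      HasTypeC Γ (.capp e₁ e₂) σ₂
  | unit (Γ : CCtx) : HasTypeC Γ .unit .unit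
  | ccase (Γ : CCtx) (t e₁ : CTm) (k : CVar) (e₂ : CTm) (σ ρ : CTy) :
      HasTypeC Γ t σ →
      (σ = .unit → HasTypeC Γ e₁ ρ) →
      (∀ σ₁ σ₂, σ = .arrow σ₁ σ₂ → HasTypeC ((k, σ) :: Γ) e₂ ρ) →
      HasTypeC Γ (.ccase t e₁ k e₂) ρ

/-- The identity continuation `k_id = λv.λt. case t of () → v | k → k v ()`. -/
def kidTm : CTm :=
  .clam (gv 0 13) (.clam (gv 0 14)
    (.ccase (.cvar (gv 0 14)) (.cvar (gv 0 13)) (gv 0 15)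
      (.capp (.capp (.cvar (gv 0 15)) (.cvar (gv 0 13))) .unit)))

/-! ## Selective CPS translation of the fine-grained λF -/

mutual
/-- CPS translation of fine-grained λF expression types. -/
def fcpsTy : FTy → CTy
  | .base ι => .base ι
  | .arrow τ₁ τ₂ μα α μβ β =>
      .arrow (fcpsTy τ₁)
        (.arrow (.arrow (fcpsTy τ₂) (.arrow (fcpsTr μα) (fcpsTy α)))
          (.arrow (fcpsTr μβ) (fcpsTy β)))
  | .parrow τ₁ τ₂ => .arrow (fcpsTy τ₁) (fcpsTy τ₂)

/-- CPS translation of fine-grained λF trail types. -/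
def fcpsTr : FTr → CTy
  | .empty => .unit
  | .cons τ μ τ' => .arrow (fcpsTy τ) (.arrow (fcpsTr μ) (fcpsTy τ'))
end

/-- Size of a trail type. -/
def FTr.size : FTr → Nat
  | .empty => 0
  | .cons _ μ _ => μ.size + 1

/-- The trail-cons operation
    `k :: t = case t of () → k | k′ → λv.λt′. k v (k′ :: t′)`,
    defined by recursion on trail types (see `consTm`). -/
def fconsTm : FTr → FTr → FTr → Nat → CTm → CTm → CTm
  | μA, .cons _ μB' _, .cons _ μC' _, m, k, t =>
      .ccase t k (gv m 10)
        (.clam (gv m 11) (.clam (gv m 12)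
          (.capp (.capp k (.cvar (gv m 11)))
            (fconsTm μB' μC' μA (m + 1) (.cvar (gv m 10)) (.cvar (gv m 12))))))
  | _, _, _, m, k, t =>
      .ccase t k (gv m 10)
        (.clam (gv m 11) (.clam (gv m 12)
          (.capp (.capp k (.cvar (gv m 11))) (.cvar (gv m 12)))))
termination_by μA μB μC _ _ _ => μA.size + μB.size + μC.size
decreasing_by simp [FTr.size]; omega

/-- The trail-append operation `t @ t′ = case t of () → t′ | k → k :: t′`. -/
def fappendTm : FTr → FTr → FTr → Nat → CTm → CTm → CTm
  | .empty, _, _, m, t, t' => .ccase t t' (gv m 10) (.cvar (gv m 10))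
  | .cons _ μ₁' _, μ₂, μ₃, m, t, t' =>
      .ccase t t' (gv m 10) (fconsTm μ₁' μ₂ μ₃ (m + 1) (.cvar (gv m 10)) t')

mutual
/-- The selective CPS translation on pure typing derivations:
    `SelP n Γ e τ e'` means `Γ ⊢p e : τ ⇝p e'`.  The level `n` generates
    fresh λC variable names. -/
inductive SelP : Nat → FCtx → Tm → FTy → CTm → Prop where
  | const (n : Nat) (Γ : FCtx) (ι c : Nat) :
      SelP n Γ (.const ι c) (.base ι) (.const ι c)
  | var (n : Nat) (Γ : FCtx) (x : String) (τ : FTy) :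
      FLookup Γ x τ →
      SelP n Γ (.var x) τ (.cvar (Sum.inl x))
  | pabs (n : Nat) (Γ : FCtx) (x : String) (e : Tm) (τ₁ τ₂ : FTy) (e' : CTm) :
      SelP (n + 1) ((x, τ₁) :: Γ) e τ₂ e' →
      SelP n Γ (.lam x e) (.parrow τ₁ τ₂) (.clam (Sum.inl x) e')
  | iabs (n : Nat) (Γ : FCtx) (x : String) (e : Tm) (τ₁ τ₂ : FTy) (μα : FTr)
      (α : FTy) (μβ : FTr) (β : FTy) (e' : CTm) :
      SelI (n + 1) ((x, τ₁) :: Γ) e τ₂ μα α μβ β e' →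
      SelP n Γ (.lam x e) (.arrow τ₁ τ₂ μα α μβ β)
        (.clam (Sum.inl x) (.clam (gv n 2) (.clam (gv n 3)
          (.capp (.capp e' (.cvar (gv n 2))) (.cvar (gv n 3))))))
  | papp (n : Nat) (Γ : FCtx) (e₁ e₂ : Tm) (τ₁ τ₂ : FTy) (e₁' e₂' : CTm) :
      SelP (n + 1) Γ e₁ (.parrow τ₁ τ₂) e₁' →
      SelP (n + 2) Γ e₂ τ₁ e₂' →
      SelP n Γ (.app e₁ e₂) τ₂ (.capp e₁' e₂')
  | prompt (n : Nat) (Γ : FCtx) (e : Tm) (β : FTy) (μi : FTr) (β' τ : FTy)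
      (e' : CTm) :
      SelI (n + 1) Γ e β μi β' .empty τ e' →
      FIdContType β μi β' →
      SelP n Γ (.prompt e) τ (.capp (.capp e' kidTm) .unit)

/-- The selective CPS translation on impure typing derivations:
    `SelI n Γ e τ μα α μβ β e'` means `Γ ⊢ e : τ @ μα α / μβ β ⇝ e'`. -/
inductive SelI : Nat → FCtx → Tm → FTy → FTr → FTy → FTr → FTy → CTm → Prop where
  | piapp (n : Nat) (Γ : FCtx) (e₁ e₂ : Tm) (τ₁ τ₂ : FTy) (μα : FTr) (α : FTy)
      (μβ : FTr) (β : FTy) (μγ : FTr) (γ : FTy) (e₁' e₂' : CTm) :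
      SelI (n + 1) Γ e₁ (.parrow τ₁ τ₂) μα α μβ β e₁' →
      SelI (n + 2) Γ e₂ τ₁ μγ γ μα α e₂' →
      SelI n Γ (.app e₁ e₂) τ₂ μγ γ μβ β
        (.clam (gv n 0)
          (.capp e₁'
            (.clam (gv n 2)
              (.capp e₂'
                (.clam (gv n 4)
                  (.capp (.cvar (gv n 0))
                    (.capp (.cvar (gv n 2)) (.cvar (gv n 4)))))))))
  | iapp (n : Nat) (Γ : FCtx) (e₁ e₂ : Tm) (τ₁ τ₂ : FTy) (μα : FTr) (α : FTy)
      (μβ : FTr) (β : FTy) (μγ : FTr) (γ : FTy) (μδ : FTr) (δ : FTy)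
      (e₁' e₂' : CTm) :
      SelI (n + 1) Γ e₁ (.arrow τ₁ τ₂ μα α μβ β) μγ γ μδ δ e₁' →
      SelI (n + 2) Γ e₂ τ₁ μβ β μγ γ e₂' →
      SelI n Γ (.app e₁ e₂) τ₂ μα α μδ δ
        (.clam (gv n 0)
          (.capp e₁'
            (.clam (gv n 2)
              (.capp e₂'
                (.clam (gv n 4)
                  (.capp (.capp (.cvar (gv n 2)) (.cvar (gv n 4)))
                    (.cvar (gv n 0))))))))
  | pcontrol (n : Nat) (Γ : FCtx) (k : String) (e : Tm) (τ α γ : FTy)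
      (μi : FTr) (γ' β : FTy) (μα : FTr) (e' : CTm) :
      SelI (n + 1) ((k, .parrow τ α) :: Γ) e γ μi γ' .empty β e' →
      FIdContType γ μi γ' →
      SelI n Γ (.control k e) τ μα α μα β
        (.clam (gv n 0) (.clam (gv n 1)
          (.capp
            (.capp
              (substC e' (Sum.inl k)
                (.clam (gv n 2)
                  (.capp (.capp (.cvar (gv n 0)) (.cvar (gv n 2)))
                    (.cvar (gv n 1)))))
              kidTm)
            .unit)))
  | icontrol (n : Nat) (Γ : FCtx) (k : String) (e : Tm) (τ τ₁ : FTy) (μ₁ : FTr)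
      (τ₁' : FTy) (μ₂ μ₀ : FTr) (α β γ : FTy) (μi : FTr) (γ' : FTy) (μα μβ : FTr)
      (e' : CTm) :
      SelI (n + 1) ((k, .arrow τ τ₁ μ₁ τ₁' μ₂ α) :: Γ) e γ μi γ' .empty β e' →
      FIdContType γ μi γ' →
      FCompatible (.cons τ₁ μ₁ τ₁') μ₂ μ₀ →
      FCompatible μβ μ₀ μα →
      SelI n Γ (.control k e) τ μα α μβ β
        (.clam (gv n 0) (.clam (gv n 1)
          (.capp
            (.capp
              (substC e' (Sum.inl k)
                (.clam (gv n 2) (.clam (gv n 3) (.clam (gv n 4)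
                  (.capp (.capp (.cvar (gv n 0)) (.cvar (gv n 2)))
                    (fappendTm μβ μ₀ μα n (.cvar (gv n 1))
                      (fconsTm μ₁ μ₂ μ₀ n (.cvar (gv n 3)) (.cvar (gv n 4)))))))))
              kidTm)
            .unit)))
  | exp (n : Nat) (Γ : FCtx) (e : Tm) (τ : FTy) (μα : FTr) (α : FTy) (e' : CTm) :
      SelP n Γ e τ e' →
      SelI n Γ e τ μα α μα α
        (.clam (gv n 0) (.clam (gv n 1)
          (.capp (.capp (.cvar (gv n 0)) e') (.cvar (gv n 1)))))
end

/-! ## Auxiliary development for the type-preservation proof -/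

/-- The CPS image of a fine-grained context. -/
def Cof (Γ : FCtx) : CCtx := Γ.map fun p => (Sum.inl p.1, fcpsTy p.2)

/-- All binder names in a λC term. -/
def bindersC : CTm → List CVar
  | .const _ _ => []
  | .cvar _ => []
  | .clam y e => y :: bindersC e
  | .capp e₁ e₂ => bindersC e₁ ++ bindersC e₂
  | .unit => []
  | .ccase t e₁ k e₂ => k :: (bindersC t ++ bindersC e₁ ++ bindersC e₂)

/-- Binders allowed in the output of the translation at level `N`. -/
def Bok (N : Nat) (z : CVar) : Prop :=
  (∃ x, z = Sum.inl x) ∨ ∃ m s, z = gv m s ∧ (N ≤ m ∧ s ≤ 12 ∨ 13 ≤ s)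

lemma Bok.mono {N : Nat} {z : CVar} (h : Bok (N + 1) z) : Bok N z := by
  rcases h with ⟨x, hx⟩ | ⟨m, s, hz, hms⟩
  · exact Or.inl ⟨x, hx⟩
  · exact Or.inr ⟨m, s, hz, by omega⟩

lemma Bok.ne0 {n : Nat} {z : CVar} (h : Bok (n + 1) z) : z ≠ gv n 0 := by
  rcases h with ⟨x, hx⟩ | ⟨m, s, hz, hms⟩
  · subst hx; simp [gv]
  · subst hz; simp [gv]; omega

lemma Bok.ne1 {n : Nat} {z : CVar} (h : Bok (n + 1) z) : z ≠ gv n 1 := by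
  rcases h with ⟨x, hx⟩ | ⟨m, s, hz, hms⟩
  · subst hx; simp [gv]
  · subst hz; simp [gv]; omega

lemma CLookup.lift {Γ Γ' : CCtx} (H : ∀ y τ, CLookup Γ y τ → CLookup Γ' y τ)
    (z : CVar) (σ : CTy) :
    ∀ y τ, CLookup ((z, σ) :: Γ) y τ → CLookup ((z, σ) :: Γ') y τ := by
  intro y τ h
  cases h with
  | here => exact .here _ _ _
  | there _ _ _ _ _ hne hl => exact .there _ _ _ _ _ hne (H _ _ hl)

/-- Renaming / weakening for λC typing. -/
lemma HasTypeC.rename {Γ : CCtx} {e : CTm} {ρ : CTy} (h : HasTypeC Γ e ρ) :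
    ∀ Γ', (∀ y τ, CLookup Γ y τ → CLookup Γ' y τ) → HasTypeC Γ' e ρ := by
  induction h with
  | const => intro Γ' H; exact .const _ _ _
  | var _ x σ hl => intro Γ' H; exact .var _ _ _ (H _ _ hl)
  | lam _ x e σ₁ σ₂ _ ih => intro Γ' H; exact .lam _ _ _ _ _ (ih _ (CLookup.lift H _ _))
  | app _ e₁ e₂ σ₁ σ₂ _ _ ih₁ ih₂ => intro Γ' H; exact .app _ _ _ _ _ (ih₁ _ H) (ih₂ _ H)
  | unit => intro Γ' H; exact .unit _
  | ccase _ t e₁ k e₂ σ ρ _ _ _ iht ih1 ih2 =>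
      intro Γ' H
      exact .ccase _ _ _ _ _ _ _ (iht _ H) (fun hσ => ih1 hσ _ H)
        (fun σ₁ σ₂ hσ => ih2 σ₁ σ₂ hσ _ (CLookup.lift H _ _))

/-- Contexts whose keys are all source variables. -/
def InlKeys (Δ : CCtx) : Prop := ∀ p ∈ Δ, ∃ x, p.1 = Sum.inl x

lemma Cof_inlKeys (Γ : FCtx) : InlKeys (Cof Γ) := by
  intro p hp
  simp only [Cof, List.mem_map] at hp
  obtain ⟨q, _, hq⟩ := hp
  exact ⟨q.1, by simp [← hq]⟩

lemma InlKeys.cons {Δ : CCtx} (h : InlKeys Δ) (x : String) (σ : CTy) :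
    InlKeys ((Sum.inl x, σ) :: Δ) := by
  intro p hp
  rcases List.mem_cons.1 hp with hp | hp
  · exact ⟨x, by simp [hp]⟩
  · exact h p hp

lemma clookup_inl {Δ : CCtx} {y : CVar} {τ : CTy} (h : CLookup Δ y τ)
    (hΔ : InlKeys Δ) : ∃ x, y = Sum.inl x := by
  induction h with
  | here Γ x σ => exact hΔ (x, σ) (by simp)
  | there Γ x y' τ τ' hne hl ih => exact ih fun p hp => hΔ p (List.mem_cons_of_mem _ hp)

lemma clookup_append_inr {L Δ : CCtx} {y : CVar} {τ : CTy}
    (hy : ∃ x, y = Sum.inl x) (h : CLookup Δ y τ)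
    (hL : ∀ p ∈ L, ∃ a, p.1 = Sum.inr a) : CLookup (L ++ Δ) y τ := by
  induction L with
  | nil => exact h
  | cons p L ih =>
      obtain ⟨a, ha⟩ := hL p (by simp)
      obtain ⟨x, hx⟩ := hy
      refine .there _ _ _ _ _ ?_ (ih fun q hq => hL q (List.mem_cons_of_mem _ hq))
      subst hx
      intro hc
      rw [← hc] at ha
      simp at ha

/-- Weakening an inl-keyed context by a stack of generated variables. -/
lemma HasTypeC.weaken_inr {Δ : CCtx} {e : CTm} {ρ : CTy} (h : HasTypeC Δ e ρ)
    (hΔ : InlKeys Δ) (L : CCtx) (hL : ∀ p ∈ L, ∃ a, p.1 = Sum.inr a) :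
    HasTypeC (L ++ Δ) e ρ :=
  h.rename _ fun y τ hl => clookup_append_inr (clookup_inl hl hΔ) hl hL

lemma flookup_cof {Γ : FCtx} {x : String} {τ : FTy} (h : FLookup Γ x τ) :
    CLookup (Cof Γ) (Sum.inl x) (fcpsTy τ) := by
  induction h with
  | here Γ x τ => exact .here _ _ _
  | there Γ x y τ τ' hne _ ih => exact .there _ _ _ _ _ (by simp [hne]) ih

lemma clookup_head {Γ : CCtx} {x : CVar} {σ τ : CTy} (h : CLookup ((x, σ) :: Γ) x τ) :
    τ = σ := by
  cases h with
  | here => rfl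
  | there _ _ _ _ _ hne _ => exact absurd rfl hne

/-- Typing of the identity continuation. -/
lemma kid_typing {β : FTy} {μi : FTr} {β' : FTy} (hid : FIdContType β μi β')
    (Δ : CCtx) :
    HasTypeC Δ kidTm (.arrow (fcpsTy β) (.arrow (fcpsTr μi) (fcpsTy β'))) := by
  refine .lam _ _ _ _ _ (.lam _ _ _ _ _ ?_)
  cases μi with
  | empty =>
      have hββ' : β = β' := hid
      subst hββ'
      refine .ccase _ _ _ _ _ (fcpsTr .empty) _ (.var _ _ _ (.here _ _ _))
        (fun _ => .var _ _ _ (.there _ _ _ _ _ (by simp [gv]) (.here _ _ _)))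
        (fun σ₁ σ₂ h => ?_)
      simp [fcpsTr] at h
  | cons τ₁ μ₁ τ₁' =>
      obtain ⟨hβ, hβ', hμ⟩ : β = τ₁ ∧ β' = τ₁' ∧ μ₁ = .empty := hid
      subst hβ; subst hβ'; subst hμ
      refine .ccase _ _ _ _ _ (fcpsTr (.cons β .empty β')) _ (.var _ _ _ (.here _ _ _))
        (fun h => by simp [fcpsTr] at h)
        (fun σ₁ σ₂ _ => ?_)
      refine .app _ _ _ CTy.unit _ ?_ (.unit _)
      refine .app _ _ _ (fcpsTy β) _ ?_ ?_
      · exact .var _ _ _ (.here _ _ _)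
      · exact .var _ _ _ (.there _ _ _ _ _ (by simp [gv])
          (.there _ _ _ _ _ (by simp [gv]) (.here _ _ _)))

lemma fcompatible_empty {μB μC : FTr} (h : FCompatible .empty μB μC) : μB = μC := by
  cases h; rfl

/-- Typing of the trail-cons operation. -/
lemma fcons_typing : ∀ {μA μB μC : FTr}, FCompatible μA μB μC →
    ∀ {τ₀ : FTy} {μ₁ : FTr} {τ₀' : FTy}, μA = .cons τ₀ μ₁ τ₀' →
    ∀ {m : Nat} {Δ : CCtx} {xk : CVar} {t : CTm},
      xk ≠ gv m 10 → xk ≠ gv m 11 → xk ≠ gv m 12 →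
      CLookup Δ xk (fcpsTr μA) → HasTypeC Δ t (fcpsTr μB) →
      HasTypeC Δ (fconsTm μ₁ μB μC m (.cvar xk) t) (fcpsTr μC) := by
  intro μA μB μC h
  induction h with
  | empty μ => intro τ₀ μ₁ τ₀' hA; cases hA
  | consEmpty τ₁ ν₁ τ₁' =>
      intro τ₀ μ₁ τ₀' hA m Δ xk t h10 h11 h12 hk ht
      cases hA
      simp only [fconsTm]
      refine .ccase _ _ _ _ _ (fcpsTr .empty) _ ht
        (fun _ => .var _ _ _ hk) (fun σ₁ σ₂ hσ => by simp [fcpsTr] at hσ)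
  | consCons τ₁ ν₁ τ₁' μ₂ μ₃ hsub ih =>
      intro τ₀ μ₁ τ₀' hA m Δ xk t h10 h11 h12 hk ht
      cases hA
      cases μ₂ with
      | empty =>
          have hν : μ₃ = ν₁ := fcompatible_empty hsub
          subst hν
          simp only [fconsTm]
          refine .ccase _ _ _ _ _ (fcpsTr .empty) _ ht
            (fun _ => .var _ _ _ hk) (fun σ₁ σ₂ hσ => by simp [fcpsTr] at hσ)
      | cons τb μB' τb' =>
          simp only [fconsTm]
          refine .ccase _ _ _ _ _ (fcpsTr (.cons τb μB' τb')) _ ht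
            (fun hσ => by simp [fcpsTr] at hσ) (fun σ₁ σ₂ _ => ?_)
          refine .lam _ _ _ _ _ (.lam _ _ _ _ _ ?_)
          refine .app _ _ _ (fcpsTr ν₁) _ ?_ ?_
          · refine .app _ _ _ (fcpsTy τ₁) _ (.var _ _ _ ?_) (.var _ _ _ ?_)
            · exact .there _ _ _ _ _ h12 (.there _ _ _ _ _ h11
                (.there _ _ _ _ _ h10 hk))
            · exact .there _ _ _ _ _ (by simp [gv]) (.here _ _ _)
          · refine ih rfl (by simp [gv]) (by simp [gv])
              (by simp [gv]) ?_ (.var _ _ _ (.here _ _ _))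
            exact .there _ _ _ _ _ (by simp [gv])
              (.there _ _ _ _ _ (by simp [gv]) (.here _ _ _))

/-- Typing of the trail-append operation. -/
lemma fappend_typing {μA μB μC : FTr} (h : FCompatible μA μB μC)
    {m : Nat} {Δ : CCtx} {t t' : CTm}
    (ht : HasTypeC Δ t (fcpsTr μA)) (ht' : HasTypeC Δ t' (fcpsTr μB))
    (ht'w : ∀ σ, HasTypeC ((gv m 10, σ) :: Δ) t' (fcpsTr μB)) :
    HasTypeC Δ (fappendTm μA μB μC m t t') (fcpsTr μC) := by
  cases μA with
  | empty =>
      have hBC : μB = μC := fcompatible_empty h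
      subst hBC
      exact .ccase _ _ _ _ _ (fcpsTr .empty) _ ht (fun _ => ht')
        (fun σ₁ σ₂ hσ => by simp [fcpsTr] at hσ)
  | cons τ₁ μ₁ τ₁' =>
      refine .ccase _ _ _ _ _ (fcpsTr (.cons τ₁ μ₁ τ₁')) _ ht
        (fun hσ => by simp [fcpsTr] at hσ) (fun σ₁ σ₂ _ => ?_)
      exact fcons_typing h rfl (by simp [gv]) (by simp [gv]) (by simp [gv])
        (.here _ _ _) (ht'w _)

/-- Binders of the trail-cons operation. -/
lemma fcons_binders : ∀ (μ₁ μB μC : FTr) (m : Nat) (k t : CTm) (z : CVar),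
    z ∈ bindersC (fconsTm μ₁ μB μC m k t) →
    z ∈ bindersC k ∨ z ∈ bindersC t ∨
      ∃ m' s, z = gv m' s ∧ m ≤ m' ∧ 10 ≤ s ∧ s ≤ 12 := by
  intro μ₁ μB μC m k t
  induction μ₁, μB, μC, m, k, t using fconsTm.induct with
  | case1 μA τb μB' τb' τc μC' τc' m k t ih =>
      intro z hz
      simp only [fconsTm, bindersC] at hz
      simp only [List.mem_cons, List.mem_append] at hz
      rcases hz with h | (h | h) | h | h | (h | h) | h
      · exact Or.inr (Or.inr ⟨m, 10, h, le_refl _, by omega, by omega⟩)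
      · exact Or.inr (Or.inl h)
      · exact Or.inl h
      · exact Or.inr (Or.inr ⟨m, 11, h, le_refl _, by omega, by omega⟩)
      · exact Or.inr (Or.inr ⟨m, 12, h, le_refl _, by omega, by omega⟩)
      · exact Or.inl h
      · simp at h
      · rcases ih z h with h' | h' | ⟨m', s, hz', hm, hs1, hs2⟩
        · simp [bindersC] at h'
        · simp [bindersC] at h'
        · exact Or.inr (Or.inr ⟨m', s, hz', by omega, hs1, hs2⟩)
  | case2 μA μB μC m k t hne =>
      intro z hz
      simp only [fconsTm, bindersC] at hz
      simp only [List.mem_cons, List.mem_append] at hz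
      rcases hz with h | (h | h) | h | h | ((h | h) | h)
      · exact Or.inr (Or.inr ⟨m, 10, h, le_refl _, by omega, by omega⟩)
      · exact Or.inr (Or.inl h)
      · exact Or.inl h
      · exact Or.inr (Or.inr ⟨m, 11, h, le_refl _, by omega, by omega⟩)
      · exact Or.inr (Or.inr ⟨m, 12, h, le_refl _, by omega, by omega⟩)
      · exact Or.inl h
      · simp at h
      · simp at h

/-- Binders of the trail-append operation. -/
lemma fappend_binders : ∀ (μA μB μC : FTr) (m : Nat) (t t' : CTm) (z : CVar),
    z ∈ bindersC (fappendTm μA μB μC m t t') →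
    z ∈ bindersC t ∨ z ∈ bindersC t' ∨
      ∃ m' s, z = gv m' s ∧ m ≤ m' ∧ 10 ≤ s ∧ s ≤ 12 := by
  intro μA μB μC m t t' z hz
  cases μA with
  | empty =>
      simp only [fappendTm, bindersC, List.mem_cons, List.mem_append] at hz
      rcases hz with h | (h | h) | h
      · exact Or.inr (Or.inr ⟨m, 10, h, le_refl _, by omega, by omega⟩)
      · exact Or.inl h
      · exact Or.inr (Or.inl h)
      · simp at h
  | cons τ₁ μ₁ τ₁' =>
      simp only [fappendTm, bindersC, List.mem_cons, List.mem_append] at hz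
      rcases hz with h | (h | h) | h
      · exact Or.inr (Or.inr ⟨m, 10, h, le_refl _, by omega, by omega⟩)
      · exact Or.inl h
      · exact Or.inr (Or.inl h)
      · rcases fcons_binders _ _ _ _ _ _ _ h with h' | h' | ⟨m', s, hz', hm, hs1, hs2⟩
        · simp [bindersC] at h'
        · exact Or.inr (Or.inl h')
        · exact Or.inr (Or.inr ⟨m', s, hz', by omega, hs1, hs2⟩)

/-- Binders of a substitution instance. -/
lemma bindersC_substC : ∀ (e : CTm) (x : CVar) (v : CTm) (z : CVar),
    z ∈ bindersC (substC e x v) → z ∈ bindersC e ∨ z ∈ bindersC v := by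
  intro e x v
  induction e with
  | const ι n => intro z hz; simp [substC, bindersC] at hz
  | cvar y =>
      intro z hz
      simp only [substC] at hz
      split at hz
      · exact Or.inr hz
      · simp [bindersC] at hz
  | clam y e ih =>
      intro z hz
      simp only [substC] at hz
      split at hz
      · exact Or.inl hz
      · simp only [bindersC, List.mem_cons] at hz ⊢
        rcases hz with h | h
        · exact Or.inl (Or.inl h)
        · rcases ih z h with h' | h'
          · exact Or.inl (Or.inr h')
          · exact Or.inr h'
  | capp e₁ e₂ ih₁ ih₂ =>
      intro z hz
      simp only [substC, bindersC, List.mem_append] at hz ⊢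
      rcases hz with h | h
      · rcases ih₁ z h with h' | h'
        · exact Or.inl (Or.inl h')
        · exact Or.inr h'
      · rcases ih₂ z h with h' | h'
        · exact Or.inl (Or.inr h')
        · exact Or.inr h'
  | unit => intro z hz; simp [substC, bindersC] at hz
  | ccase t e₁ k e₂ iht ih₁ ih₂ =>
      intro z hz
      simp only [substC, bindersC, List.mem_cons, List.mem_append] at hz ⊢
      rcases hz with h | (h | h) | h
      · exact Or.inl (Or.inl h)
      · rcases iht z h with h' | h'
        · exact Or.inl (Or.inr (Or.inl (Or.inl h')))
        · exact Or.inr h'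
      · rcases ih₁ z h with h' | h'
        · exact Or.inl (Or.inr (Or.inl (Or.inr h')))
        · exact Or.inr h'
      · split at h
        · exact Or.inl (Or.inr (Or.inr h))
        · rcases ih₂ z h with h' | h'
          · exact Or.inl (Or.inr (Or.inr h'))
          · exact Or.inr h'

/-- Substitution lemma for λC typing, avoiding capture of the two free
    generated variables of the substituted value. -/
lemma subst_typing {σa σb σ : CTy} {a b : CVar} {v : CTm}
    (hv : ∀ Δ, CLookup Δ a σa → CLookup Δ b σb → HasTypeC Δ v σ) :
    ∀ {Γ₁ : CCtx} {e : CTm} {ρ : CTy}, HasTypeC Γ₁ e ρ →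
    ∀ (x : CVar) (Γ₂ : CCtx), x ≠ a → x ≠ b →
      (∀ τ, CLookup Γ₁ x τ → τ = σ) →
      (∀ y τ, y ≠ x → CLookup Γ₁ y τ → CLookup Γ₂ y τ) →
      (∀ z ∈ bindersC e, z ≠ a ∧ z ≠ b) →
      CLookup Γ₂ a σa → CLookup Γ₂ b σb →
      HasTypeC Γ₂ (substC e x v) ρ := by
  intro Γ₁ e ρ h
  induction h with
  | const Γ ι n => intro x Γ₂ _ _ _ _ _ _ _; exact .const _ _ _
  | var Γ y τ hl =>
      intro x Γ₂ _ _ hx hmap _ ha hb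
      by_cases hyx : y = x
      · subst hyx
        have : τ = σ := hx _ hl
        subst this
        simpa [substC] using hv Γ₂ ha hb
      · simpa [substC, hyx] using HasTypeC.var _ _ _ (hmap _ _ hyx hl)
  | lam Γ y e σ₁ σ₂ hbody ih =>
      intro x Γ₂ hxa hxb hx hmap hbnd ha hb
      by_cases hyx : y = x
      · subst hyx
        simp only [substC, if_pos rfl]
        refine .lam _ _ _ _ _ (hbody.rename _ ?_)
        intro z τ hl
        cases hl with
        | here => exact .here _ _ _
        | there _ _ _ _ _ hne hl' => exact .there _ _ _ _ _ hne (hmap _ _ hne hl')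
      · simp only [substC, if_neg hyx]
        have hya : y ≠ a := (hbnd y (by simp [bindersC])).1
        have hyb : y ≠ b := (hbnd y (by simp [bindersC])).2
        refine .lam _ _ _ _ _ (ih x ((y, σ₁) :: Γ₂) hxa hxb ?_ ?_ ?_ ?_ ?_)
        · intro τ hl
          cases hl with
          | here => exact absurd rfl hyx
          | there _ _ _ _ _ _ hl' => exact hx _ hl'
        · intro z τ hz hl
          cases hl with
          | here => exact .here _ _ _
          | there _ _ _ _ _ hne hl' => exact .there _ _ _ _ _ hne (hmap _ _ hz hl')
        · intro z hz; exact hbnd z (by simp [bindersC, hz])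
        · exact .there _ _ _ _ _ (Ne.symm hya) ha
        · exact .there _ _ _ _ _ (Ne.symm hyb) hb
  | app Γ e₁ e₂ σ₁ σ₂ h₁ h₂ ih₁ ih₂ =>
      intro x Γ₂ hxa hxb hx hmap hbnd ha hb
      exact .app _ _ _ _ _
        (ih₁ x Γ₂ hxa hxb hx hmap
          (fun z hz => hbnd z (by simp [bindersC, hz])) ha hb)
        (ih₂ x Γ₂ hxa hxb hx hmap
          (fun z hz => hbnd z (by simp [bindersC, hz])) ha hb)
  | unit Γ => intro x Γ₂ _ _ _ _ _ _ _; exact .unit _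
  | ccase Γ t e₁ k e₂ σ₀ ρ ht h1 h2 iht ih1 ih2 =>
      intro x Γ₂ hxa hxb hx hmap hbnd ha hb
      have hka : k ≠ a := (hbnd k (by simp [bindersC])).1
      have hkb : k ≠ b := (hbnd k (by simp [bindersC])).2
      refine .ccase _ _ _ _ _ σ₀ _
        (iht x Γ₂ hxa hxb hx hmap
          (fun z hz => hbnd z (by simp [bindersC, hz])) ha hb)
        (fun hσ => ih1 hσ x Γ₂ hxa hxb hx hmap
          (fun z hz => hbnd z (by simp [bindersC, hz])) ha hb)
        (fun σ₁ σ₂ hσ => ?_)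
      by_cases hkx : k = x
      · subst hkx
        simp only [if_pos rfl]
        refine (h2 σ₁ σ₂ hσ).rename _ ?_
        intro z τ hl
        cases hl with
        | here => exact .here _ _ _
        | there _ _ _ _ _ hne hl' => exact .there _ _ _ _ _ hne (hmap _ _ hne hl')
      · simp only [if_neg hkx]
        refine ih2 σ₁ σ₂ hσ x ((k, σ₀) :: Γ₂) hxa hxb ?_ ?_ ?_ ?_ ?_
        · intro τ hl
          cases hl with
          | here => exact absurd rfl hkx
          | there _ _ _ _ _ _ hl' => exact hx _ hl'
        · intro z τ hz hl
          cases hl with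
          | here => exact .here _ _ _
          | there _ _ _ _ _ hne hl' => exact .there _ _ _ _ _ hne (hmap _ _ hz hl')
        · intro z hz; exact hbnd z (by simp [bindersC, hz])
        · exact .there _ _ _ _ _ (Ne.symm hka) ha
        · exact .there _ _ _ _ _ (Ne.symm hkb) hb

/-- Continuation type. -/
abbrev KT (τ : FTy) (μ : FTr) (α : FTy) : CTy :=
  .arrow (fcpsTy τ) (.arrow (fcpsTr μ) (fcpsTy α))

/-- Motive for pure derivations. -/
def MP (n : Nat) (Γ : FCtx) (_e : Tm) (τ : FTy) (e' : CTm) : Prop :=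
  HasTypeC (Cof Γ) e' (fcpsTy τ) ∧ ∀ z ∈ bindersC e', Bok n z

/-- Motive for impure derivations. -/
def MI (n : Nat) (Γ : FCtx) (_e : Tm) (τ : FTy) (μα : FTr) (α : FTy)
    (μβ : FTr) (β : FTy) (e' : CTm) : Prop :=
  HasTypeC (Cof Γ) e' (.arrow (KT τ μα α) (.arrow (fcpsTr μβ) (fcpsTy β))) ∧
    ∀ z ∈ bindersC e', Bok n z

lemma bok_inl (N : Nat) (x : String) : Bok N (Sum.inl x) := Or.inl ⟨x, rfl⟩

lemma bok_gv {N m s : Nat} (h : N ≤ m ∧ s ≤ 12 ∨ 13 ≤ s) : Bok N (gv m s) :=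
  Or.inr ⟨m, s, rfl, h⟩

lemma bok_kid' {N : Nat} {z : CVar}
    (h : z = gv 0 13 ∨ z = gv 0 14 ∨ z = gv 0 15) : Bok N z := by
  rcases h with h | h | h <;> subst h <;> exact bok_gv (Or.inr (by omega))

lemma bok_kid {N : Nat} {z : CVar} (h : z ∈ bindersC kidTm) : Bok N z :=
  bok_kid' (by simpa [kidTm, bindersC] using h)

lemma weaken1 {Γ : FCtx} {e : CTm} {ρ : CTy} (h : HasTypeC (Cof Γ) e ρ)
    (a : Nat × Nat) (σ : CTy) : HasTypeC ((Sum.inr a, σ) :: Cof Γ) e ρ :=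
  h.weaken_inr (Cof_inlKeys Γ) [(Sum.inr a, σ)]
    (by rintro p hp; simp only [List.mem_singleton] at hp; subst hp; exact ⟨a, rfl⟩)

lemma weaken2 {Γ : FCtx} {e : CTm} {ρ : CTy} (h : HasTypeC (Cof Γ) e ρ)
    (a b : Nat × Nat) (σa σb : CTy) :
    HasTypeC ((Sum.inr a, σa) :: (Sum.inr b, σb) :: Cof Γ) e ρ :=
  h.weaken_inr (Cof_inlKeys Γ) [(Sum.inr a, σa), (Sum.inr b, σb)] (by
    rintro p hp
    simp only [List.mem_cons] at hp
    rcases hp with h | h | h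
    · subst h; exact ⟨a, rfl⟩
    · subst h; exact ⟨b, rfl⟩
    · simp at h)

lemma weaken3 {Γ : FCtx} {e : CTm} {ρ : CTy} (h : HasTypeC (Cof Γ) e ρ)
    (a b c : Nat × Nat) (σa σb σc : CTy) :
    HasTypeC ((Sum.inr a, σa) :: (Sum.inr b, σb) :: (Sum.inr c, σc) :: Cof Γ) e ρ :=
  h.weaken_inr (Cof_inlKeys Γ) [(Sum.inr a, σa), (Sum.inr b, σb), (Sum.inr c, σc)]
    (by
    rintro p hp
    simp only [List.mem_cons] at hp
    rcases hp with h | h | h | h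
    · subst h; exact ⟨a, rfl⟩
    · subst h; exact ⟨b, rfl⟩
    · subst h; exact ⟨c, rfl⟩
    · simp at h)

section Cases

lemma case_const (n : Nat) (Γ : FCtx) (ι c : Nat) :
    MP n Γ (.const ι c) (.base ι) (.const ι c) :=
  ⟨by simpa [fcpsTy] using HasTypeC.const (Cof Γ) ι c, by simp [bindersC]⟩

lemma case_var (n : Nat) (Γ : FCtx) (x : String) (τ : FTy) (hl : FLookup Γ x τ) :
    MP n Γ (.var x) τ (.cvar (Sum.inl x)) :=
  ⟨.var _ _ _ (flookup_cof hl), by simp [bindersC]⟩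

lemma case_pabs (n : Nat) (Γ : FCtx) (x : String) (e : Tm) (τ₁ τ₂ : FTy) (e' : CTm)
    (_ : SelP (n + 1) ((x, τ₁) :: Γ) e τ₂ e')
    (ih : MP (n + 1) ((x, τ₁) :: Γ) e τ₂ e') :
    MP n Γ (.lam x e) (.parrow τ₁ τ₂) (.clam (Sum.inl x) e') := by
  refine ⟨?_, ?_⟩
  · simp only [fcpsTy]
    exact .lam _ _ _ _ _ ih.1
  · intro z hz
    simp only [bindersC, List.mem_cons] at hz
    rcases hz with h | h
    · subst h; exact bok_inl _ _
    · exact (ih.2 z h).mono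

lemma case_iabs (n : Nat) (Γ : FCtx) (x : String) (e : Tm) (τ₁ τ₂ : FTy)
    (μα : FTr) (α : FTy) (μβ : FTr) (β : FTy) (e' : CTm)
    (_ : SelI (n + 1) ((x, τ₁) :: Γ) e τ₂ μα α μβ β e')
    (ih : MI (n + 1) ((x, τ₁) :: Γ) e τ₂ μα α μβ β e') :
    MP n Γ (.lam x e) (.arrow τ₁ τ₂ μα α μβ β)
      (.clam (Sum.inl x) (.clam (gv n 2) (.clam (gv n 3)
        (.capp (.capp e' (.cvar (gv n 2))) (.cvar (gv n 3)))))) := by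
  refine ⟨?_, ?_⟩
  · simp only [fcpsTy]
    refine .lam _ _ _ _ _ (.lam _ _ _ _ _ (.lam _ _ _ _ _ ?_))
    refine .app _ _ _ (fcpsTr μβ) _ ?_ (.var _ _ _ (.here _ _ _))
    refine .app _ _ _ (KT τ₂ μα α) _ ?_ ?_
    · exact (ih.1.weaken_inr (Cof_inlKeys ((x, τ₁) :: Γ))
        [(gv n 3, fcpsTr μβ), (gv n 2, KT τ₂ μα α)] (by simp [gv]))
    · exact .var _ _ _ (.there _ _ _ _ _ (by simp [gv]) (.here _ _ _))
  · intro z hz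
    simp only [bindersC, List.mem_cons, List.mem_append, List.not_mem_nil,
      or_false, false_or] at hz
    rcases hz with h | h | h | h
    · subst h; exact bok_inl _ _
    · subst h; exact bok_gv (by omega)
    · subst h; exact bok_gv (by omega)
    · exact (ih.2 z h).mono

lemma case_papp (n : Nat) (Γ : FCtx) (e₁ e₂ : Tm) (τ₁ τ₂ : FTy) (e₁' e₂' : CTm)
    (_ : SelP (n + 1) Γ e₁ (.parrow τ₁ τ₂) e₁') (_ : SelP (n + 2) Γ e₂ τ₁ e₂')
    (ih₁ : MP (n + 1) Γ e₁ (.parrow τ₁ τ₂) e₁') (ih₂ : MP (n + 2) Γ e₂ τ₁ e₂') :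
    MP n Γ (.app e₁ e₂) τ₂ (.capp e₁' e₂') := by
  refine ⟨?_, ?_⟩
  · have h1 := ih₁.1
    simp only [fcpsTy] at h1
    exact .app _ _ _ _ _ h1 ih₂.1
  · intro z hz
    simp only [bindersC, List.mem_append] at hz
    rcases hz with h | h
    · exact (ih₁.2 z h).mono
    · exact ((ih₂.2 z h).mono).mono

lemma case_prompt (n : Nat) (Γ : FCtx) (e : Tm) (β : FTy) (μi : FTr) (β' τ : FTy)
    (e' : CTm) (_ : SelI (n + 1) Γ e β μi β' .empty τ e')
    (hid : FIdContType β μi β')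
    (ih : MI (n + 1) Γ e β μi β' .empty τ e') :
    MP n Γ (.prompt e) τ (.capp (.capp e' kidTm) .unit) := by
  refine ⟨?_, ?_⟩
  · have h1 := ih.1
    simp only [fcpsTr] at h1
    exact .app _ _ _ CTy.unit _ (.app _ _ _ (KT β μi β') _ h1 (kid_typing hid _))
      (.unit _)
  · intro z hz
    simp only [bindersC, List.mem_append, List.not_mem_nil, or_false] at hz
    rcases hz with h | h
    · exact (ih.2 z h).mono
    · exact bok_kid' (by simpa [kidTm, bindersC] using h)

lemma case_piapp (n : Nat) (Γ : FCtx) (e₁ e₂ : Tm) (τ₁ τ₂ : FTy) (μα : FTr)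
    (α : FTy) (μβ : FTr) (β : FTy) (μγ : FTr) (γ : FTy) (e₁' e₂' : CTm)
    (_ : SelI (n + 1) Γ e₁ (.parrow τ₁ τ₂) μα α μβ β e₁')
    (_ : SelI (n + 2) Γ e₂ τ₁ μγ γ μα α e₂')
    (ih₁ : MI (n + 1) Γ e₁ (.parrow τ₁ τ₂) μα α μβ β e₁')
    (ih₂ : MI (n + 2) Γ e₂ τ₁ μγ γ μα α e₂') :
    MI n Γ (.app e₁ e₂) τ₂ μγ γ μβ β
      (.clam (gv n 0)
        (.capp e₁'
          (.clam (gv n 2)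
            (.capp e₂'
              (.clam (gv n 4)
                (.capp (.cvar (gv n 0))
                  (.capp (.cvar (gv n 2)) (.cvar (gv n 4))))))))) := by
  refine ⟨?_, ?_⟩
  · refine .lam _ _ _ _ _ ?_
    refine .app _ _ _ (KT (.parrow τ₁ τ₂) μα α) _
      (weaken1 ih₁.1 _ _) (.lam _ _ _ _ _ ?_)
    refine .app _ _ _ (KT τ₁ μγ γ) _
      (weaken2 ih₂.1 _ _ _ _) (.lam _ _ _ _ _ ?_)
    refine .app _ _ _ (fcpsTy τ₂) _ ?_ ?_
    · exact .var _ _ _ (.there _ _ _ _ _ (by simp [gv])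
        (.there _ _ _ _ _ (by simp [gv]) (.here _ _ _)))
    · have hg2 : CLookup ((gv n 4, fcpsTy τ₁) :: (gv n 2, fcpsTy (.parrow τ₁ τ₂))
          :: (gv n 0, KT τ₂ μγ γ) :: Cof Γ) (gv n 2) (fcpsTy (.parrow τ₁ τ₂)) :=
        .there _ _ _ _ _ (by simp [gv]) (.here _ _ _)
      have : fcpsTy (.parrow τ₁ τ₂) = .arrow (fcpsTy τ₁) (fcpsTy τ₂) := by
        simp [fcpsTy]
      rw [this] at hg2
      exact .app _ _ _ (fcpsTy τ₁) _ (.var _ _ _ hg2) (.var _ _ _ (.here _ _ _))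
  · intro z hz
    simp only [bindersC, List.mem_cons, List.mem_append, List.not_mem_nil,
      or_false, false_or] at hz
    rcases hz with h | h | h | h | h
    · subst h; exact bok_gv (by omega)
    · exact (ih₁.2 z h).mono
    · subst h; exact bok_gv (by omega)
    · exact ((ih₂.2 z h).mono).mono
    · subst h; exact bok_gv (by omega)

lemma case_iapp (n : Nat) (Γ : FCtx) (e₁ e₂ : Tm) (τ₁ τ₂ : FTy) (μα : FTr)
    (α : FTy) (μβ : FTr) (β : FTy) (μγ : FTr) (γ : FTy) (μδ : FTr) (δ : FTy)
    (e₁' e₂' : CTm)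
    (_ : SelI (n + 1) Γ e₁ (.arrow τ₁ τ₂ μα α μβ β) μγ γ μδ δ e₁')
    (_ : SelI (n + 2) Γ e₂ τ₁ μβ β μγ γ e₂')
    (ih₁ : MI (n + 1) Γ e₁ (.arrow τ₁ τ₂ μα α μβ β) μγ γ μδ δ e₁')
    (ih₂ : MI (n + 2) Γ e₂ τ₁ μβ β μγ γ e₂') :
    MI n Γ (.app e₁ e₂) τ₂ μα α μδ δ
      (.clam (gv n 0)
        (.capp e₁'
          (.clam (gv n 2)
            (.capp e₂'
              (.clam (gv n 4)
                (.capp (.capp (.cvar (gv n 2)) (.cvar (gv n 4)))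
                  (.cvar (gv n 0)))))))) := by
  refine ⟨?_, ?_⟩
  · refine .lam _ _ _ _ _ ?_
    refine .app _ _ _ (KT (.arrow τ₁ τ₂ μα α μβ β) μγ γ) _
      (weaken1 ih₁.1 _ _) (.lam _ _ _ _ _ ?_)
    refine .app _ _ _ (KT τ₁ μβ β) _
      (weaken2 ih₂.1 _ _ _ _) (.lam _ _ _ _ _ ?_)
    refine .app _ _ _ (KT τ₂ μα α) _ ?_ ?_
    · have hg2 : CLookup ((gv n 4, fcpsTy τ₁) ::
          (gv n 2, fcpsTy (.arrow τ₁ τ₂ μα α μβ β)) ::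
          (gv n 0, KT τ₂ μα α) :: Cof Γ) (gv n 2)
          (fcpsTy (.arrow τ₁ τ₂ μα α μβ β)) :=
        .there _ _ _ _ _ (by simp [gv]) (.here _ _ _)
      have : fcpsTy (.arrow τ₁ τ₂ μα α μβ β) =
          .arrow (fcpsTy τ₁) (.arrow (KT τ₂ μα α) (.arrow (fcpsTr μβ) (fcpsTy β))) := by
        simp [fcpsTy]
      rw [this] at hg2
      exact .app _ _ _ (fcpsTy τ₁) _ (.var _ _ _ hg2) (.var _ _ _ (.here _ _ _))
    · exact .var _ _ _ (.there _ _ _ _ _ (by simp [gv])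
        (.there _ _ _ _ _ (by simp [gv]) (.here _ _ _)))
  · intro z hz
    simp only [bindersC, List.mem_cons, List.mem_append, List.not_mem_nil,
      or_false, false_or] at hz
    rcases hz with h | h | h | h | h
    · subst h; exact bok_gv (by omega)
    · exact (ih₁.2 z h).mono
    · subst h; exact bok_gv (by omega)
    · exact ((ih₂.2 z h).mono).mono
    · subst h; exact bok_gv (by omega)

lemma case_pcontrol (n : Nat) (Γ : FCtx) (k : String) (e : Tm) (τ α γ : FTy)
    (μi : FTr) (γ' β : FTy) (μα : FTr) (e' : CTm)
    (_ : SelI (n + 1) ((k, .parrow τ α) :: Γ) e γ μi γ' .empty β e')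
    (hid : FIdContType γ μi γ')
    (ih : MI (n + 1) ((k, .parrow τ α) :: Γ) e γ μi γ' .empty β e') :
    MI n Γ (.control k e) τ μα α μα β
      (.clam (gv n 0) (.clam (gv n 1)
        (.capp
          (.capp
            (substC e' (Sum.inl k)
              (.clam (gv n 2)
                (.capp (.capp (.cvar (gv n 0)) (.cvar (gv n 2)))
                  (.cvar (gv n 1)))))
            kidTm)
          .unit))) := by
  have hv : ∀ Δ, CLookup Δ (gv n 0) (KT τ μα α) → CLookup Δ (gv n 1) (fcpsTr μα) →
      HasTypeC Δ (.clam (gv n 2)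
        (.capp (.capp (.cvar (gv n 0)) (.cvar (gv n 2))) (.cvar (gv n 1))))
        (fcpsTy (.parrow τ α)) := by
    intro Δ ha hb
    have : fcpsTy (.parrow τ α) = .arrow (fcpsTy τ) (fcpsTy α) := by simp [fcpsTy]
    rw [this]
    refine .lam _ _ _ _ _ ?_
    refine .app _ _ _ (fcpsTr μα) _ ?_ ?_
    · refine .app _ _ _ (fcpsTy τ) _ (.var _ _ _ ?_) (.var _ _ _ (.here _ _ _))
      exact .there _ _ _ _ _ (by simp [gv]) ha
    · exact .var _ _ _ (.there _ _ _ _ _ (by simp [gv]) hb)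
  refine ⟨?_, ?_⟩
  · refine .lam _ _ _ _ _ (.lam _ _ _ _ _ ?_)
    refine .app _ _ _ CTy.unit _ ?_ (.unit _)
    refine .app _ _ _ (KT γ μi γ') _ ?_ (kid_typing hid _)
    have hsub : HasTypeC ((gv n 1, fcpsTr μα) :: (gv n 0, KT τ μα α) :: Cof Γ)
        (substC e' (Sum.inl k)
          (.clam (gv n 2)
            (.capp (.capp (.cvar (gv n 0)) (.cvar (gv n 2))) (.cvar (gv n 1)))))
        (.arrow (KT γ μi γ') (.arrow (fcpsTr .empty) (fcpsTy β))) := by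
      refine subst_typing hv ih.1 (Sum.inl k) _ (by simp [gv]) (by simp [gv])
        ?_ ?_ ?_ ?_ ?_
      · intro τ' hl; exact clookup_head hl
      · intro y τ' hy hl
        cases hl with
        | here => exact absurd rfl hy
        | there _ _ _ _ _ _ hl' =>
            obtain ⟨s, hs⟩ := clookup_inl hl' (Cof_inlKeys Γ)
            subst hs
            exact .there _ _ _ _ _ (by simp [gv])
              (.there _ _ _ _ _ (by simp [gv]) hl')
      · intro z hz; exact ⟨(ih.2 z hz).ne0, (ih.2 z hz).ne1⟩
      · exact .there _ _ _ _ _ (by simp [gv]) (.here _ _ _)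
      · exact .here _ _ _
    simpa [fcpsTr] using hsub
  · intro z hz
    simp only [bindersC, List.mem_cons, List.mem_append, List.not_mem_nil,
      or_false, false_or] at hz
    rcases hz with h | h | h | h
    · subst h; exact bok_gv (by omega)
    · subst h; exact bok_gv (by omega)
    · rcases bindersC_substC _ _ _ _ h with h' | h'
      · exact (ih.2 z h').mono
      · simp only [bindersC, List.mem_cons, List.mem_append, List.not_mem_nil,
          or_false, false_or] at h'
        subst h'; exact bok_gv (by omega)
    · exact bok_kid' (by simpa [kidTm, bindersC] using h)

lemma case_icontrol (n : Nat) (Γ : FCtx) (k : String) (e : Tm) (τ τ₁ : FTy)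
    (μ₁ : FTr) (τ₁' : FTy) (μ₂ μ₀ : FTr) (α β γ : FTy) (μi : FTr) (γ' : FTy)
    (μα μβ : FTr) (e' : CTm)
    (_ : SelI (n + 1) ((k, .arrow τ τ₁ μ₁ τ₁' μ₂ α) :: Γ) e γ μi γ' .empty β e')
    (hid : FIdContType γ μi γ')
    (hc1 : FCompatible (.cons τ₁ μ₁ τ₁') μ₂ μ₀)
    (hc2 : FCompatible μβ μ₀ μα)
    (ih : MI (n + 1) ((k, .arrow τ τ₁ μ₁ τ₁' μ₂ α) :: Γ) e γ μi γ' .empty β e') :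
    MI n Γ (.control k e) τ μα α μβ β
      (.clam (gv n 0) (.clam (gv n 1)
        (.capp
          (.capp
            (substC e' (Sum.inl k)
              (.clam (gv n 2) (.clam (gv n 3) (.clam (gv n 4)
                (.capp (.capp (.cvar (gv n 0)) (.cvar (gv n 2)))
                  (fappendTm μβ μ₀ μα n (.cvar (gv n 1))
                    (fconsTm μ₁ μ₂ μ₀ n (.cvar (gv n 3)) (.cvar (gv n 4)))))))))
            kidTm)
          .unit))) := by
  have hv : ∀ Δ, CLookup Δ (gv n 0) (KT τ μα α) → CLookup Δ (gv n 1) (fcpsTr μβ) →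
      HasTypeC Δ (.clam (gv n 2) (.clam (gv n 3) (.clam (gv n 4)
        (.capp (.capp (.cvar (gv n 0)) (.cvar (gv n 2)))
          (fappendTm μβ μ₀ μα n (.cvar (gv n 1))
            (fconsTm μ₁ μ₂ μ₀ n (.cvar (gv n 3)) (.cvar (gv n 4))))))))
        (fcpsTy (.arrow τ τ₁ μ₁ τ₁' μ₂ α)) := by
    intro Δ ha hb
    have : fcpsTy (.arrow τ τ₁ μ₁ τ₁' μ₂ α) =
        .arrow (fcpsTy τ) (.arrow (KT τ₁ μ₁ τ₁') (.arrow (fcpsTr μ₂) (fcpsTy α))) := by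
      simp [fcpsTy]
    rw [this]
    refine .lam _ _ _ _ _ (.lam _ _ _ _ _ (.lam _ _ _ _ _ ?_))
    have ha' : CLookup ((gv n 4, fcpsTr μ₂) :: (gv n 3, KT τ₁ μ₁ τ₁') ::
        (gv n 2, fcpsTy τ) :: Δ) (gv n 0) (KT τ μα α) :=
      .there _ _ _ _ _ (by simp [gv]) (.there _ _ _ _ _ (by simp [gv])
        (.there _ _ _ _ _ (by simp [gv]) ha))
    have hb' : CLookup ((gv n 4, fcpsTr μ₂) :: (gv n 3, KT τ₁ μ₁ τ₁') ::
        (gv n 2, fcpsTy τ) :: Δ) (gv n 1) (fcpsTr μβ) :=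
      .there _ _ _ _ _ (by simp [gv]) (.there _ _ _ _ _ (by simp [gv])
        (.there _ _ _ _ _ (by simp [gv]) hb))
    refine .app _ _ _ (fcpsTr μα) _ ?_ ?_
    · exact .app _ _ _ (fcpsTy τ) _ (.var _ _ _ ha')
        (.var _ _ _ (.there _ _ _ _ _ (by simp [gv])
          (.there _ _ _ _ _ (by simp [gv]) (.here _ _ _))))
    · refine fappend_typing hc2 (.var _ _ _ hb') ?_ ?_
      · refine fcons_typing hc1 rfl (by simp [gv]) (by simp [gv]) (by simp [gv])
          ?_ (.var _ _ _ (.here _ _ _))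
        exact .there _ _ _ _ _ (by simp [gv]) (.here _ _ _)
      · intro σ'
        refine fcons_typing hc1 rfl (by simp [gv]) (by simp [gv]) (by simp [gv])
          ?_ (.var _ _ _ (.there _ _ _ _ _ (by simp [gv]) (.here _ _ _)))
        exact .there _ _ _ _ _ (by simp [gv])
          (.there _ _ _ _ _ (by simp [gv]) (.here _ _ _))
  refine ⟨?_, ?_⟩
  · refine .lam _ _ _ _ _ (.lam _ _ _ _ _ ?_)
    refine .app _ _ _ CTy.unit _ ?_ (.unit _)
    refine .app _ _ _ (KT γ μi γ') _ ?_ (kid_typing hid _)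
    have hsub : HasTypeC ((gv n 1, fcpsTr μβ) :: (gv n 0, KT τ μα α) :: Cof Γ)
        (substC e' (Sum.inl k)
          (.clam (gv n 2) (.clam (gv n 3) (.clam (gv n 4)
            (.capp (.capp (.cvar (gv n 0)) (.cvar (gv n 2)))
              (fappendTm μβ μ₀ μα n (.cvar (gv n 1))
                (fconsTm μ₁ μ₂ μ₀ n (.cvar (gv n 3)) (.cvar (gv n 4)))))))))
        (.arrow (KT γ μi γ') (.arrow (fcpsTr .empty) (fcpsTy β))) := by
      refine subst_typing hv ih.1 (Sum.inl k) _ (by simp [gv]) (by simp [gv])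
        ?_ ?_ ?_ ?_ ?_
      · intro τ' hl; exact clookup_head hl
      · intro y τ' hy hl
        cases hl with
        | here => exact absurd rfl hy
        | there _ _ _ _ _ _ hl' =>
            obtain ⟨s, hs⟩ := clookup_inl hl' (Cof_inlKeys Γ)
            subst hs
            exact .there _ _ _ _ _ (by simp [gv])
              (.there _ _ _ _ _ (by simp [gv]) hl')
      · intro z hz; exact ⟨(ih.2 z hz).ne0, (ih.2 z hz).ne1⟩
      · exact .there _ _ _ _ _ (by simp [gv]) (.here _ _ _)
      · exact .here _ _ _
    simpa [fcpsTr] using hsub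
  · intro z hz
    simp only [bindersC, List.mem_cons, List.mem_append, List.not_mem_nil,
      or_false, false_or] at hz
    rcases hz with h | h | h | h
    · subst h; exact bok_gv (by omega)
    · subst h; exact bok_gv (by omega)
    · rcases bindersC_substC _ _ _ _ h with h' | h'
      · exact (ih.2 z h').mono
      · simp only [bindersC, List.mem_cons, List.mem_append, List.not_mem_nil,
          or_false, false_or] at h'
        rcases h' with h' | h' | h' | h'
        · subst h'; exact bok_gv (by omega)
        · subst h'; exact bok_gv (by omega)
        · subst h'; exact bok_gv (by omega)
        · rcases fappend_binders _ _ _ _ _ _ _ h' with h'' | h'' | ⟨m', s, hz', hm, hs1, hs2⟩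
          · simp [bindersC] at h''
          · rcases fcons_binders _ _ _ _ _ _ _ h'' with h3 | h3 | ⟨m', s, hz', hm, hs1, hs2⟩
            · simp [bindersC] at h3
            · simp [bindersC] at h3
            · subst hz'; exact bok_gv (by omega)
          · subst hz'; exact bok_gv (by omega)
    · exact bok_kid' (by simpa [kidTm, bindersC] using h)

lemma case_exp (n : Nat) (Γ : FCtx) (e : Tm) (τ : FTy) (μα : FTr) (α : FTy)
    (e' : CTm) (_ : SelP n Γ e τ e') (ih : MP n Γ e τ e') :
    MI n Γ e τ μα α μα α
      (.clam (gv n 0) (.clam (gv n 1)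
        (.capp (.capp (.cvar (gv n 0)) e') (.cvar (gv n 1))))) := by
  refine ⟨?_, ?_⟩
  · refine .lam _ _ _ _ _ (.lam _ _ _ _ _ ?_)
    refine .app _ _ _ (fcpsTr μα) _ ?_ (.var _ _ _ (.here _ _ _))
    refine .app _ _ _ (fcpsTy τ) _ ?_ (weaken2 ih.1 _ _ _ _)
    exact .var _ _ _ (.there _ _ _ _ _ (by simp [gv]) (.here _ _ _))
  · intro z hz
    simp only [bindersC, List.mem_cons, List.mem_append, List.not_mem_nil,
      or_false, false_or] at hz
    rcases hz with h | h | h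
    · subst h; exact bok_gv (by omega)
    · subst h; exact bok_gv (by omega)
    · exact ih.2 z h

end Cases

theorem sel_main :
    (∀ (n : Nat) (Γ : FCtx) (e : Tm) (τ : FTy) (e' : CTm),
        SelP n Γ e τ e' → MP n Γ e τ e') ∧
    (∀ (n : Nat) (Γ : FCtx) (e : Tm) (τ : FTy) (μα : FTr) (α : FTy)
        (μβ : FTr) (β : FTy) (e' : CTm),
        SelI n Γ e τ μα α μβ β e' → MI n Γ e τ μα α μβ β e') := by
  constructor
  · intro n Γ e τ e' h
    exact SelP.rec (motive_1 := fun n Γ e τ e' _ => MP n Γ e τ e')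
      (motive_2 := fun n Γ e τ μα α μβ β e' _ => MI n Γ e τ μα α μβ β e')
      case_const case_var case_pabs case_iabs case_papp case_prompt
      case_piapp case_iapp case_pcontrol case_icontrol case_exp h
  · intro n Γ e τ μα α μβ β e' h
    exact SelI.rec (motive_1 := fun n Γ e τ e' _ => MP n Γ e τ e')
      (motive_2 := fun n Γ e τ μα α μβ β e' _ => MI n Γ e τ μα α μβ β e')
      case_const case_var case_pabs case_iabs case_papp case_prompt
      case_piapp case_iapp case_pcontrol case_icontrol case_exp h

/-- **Type preservation of the selective CPS translation**:
    (1) if `Γ ⊢p e : τ ⇝p e′` then `⟦Γ⟧ ⊢C e′ : ⟦τ⟧`; and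
    (2) if `Γ ⊢ e : τ @ μα α / μβ β ⇝ e′` then
    `⟦Γ⟧ ⊢C e′ : (⟦τ⟧ → ⟦μα⟧ → ⟦α⟧) → ⟦μβ⟧ → ⟦β⟧`. -/
theorem selective_cps_preserves_typing :
    (∀ (n : Nat) (Γ : FCtx) (e : Tm) (τ : FTy) (e' : CTm),
        SelP n Γ e τ e' →
        HasTypeC (Γ.map fun p => (Sum.inl p.1, fcpsTy p.2)) e' (fcpsTy τ)) ∧
    (∀ (n : Nat) (Γ : FCtx) (e : Tm) (τ : FTy) (μα : FTr) (α : FTy)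
        (μβ : FTr) (β : FTy) (e' : CTm),
        SelI n Γ e τ μα α μβ β e' →
        HasTypeC (Γ.map fun p => (Sum.inl p.1, fcpsTy p.2)) e'
          (.arrow (.arrow (fcpsTy τ) (.arrow (fcpsTr μα) (fcpsTy α)))
            (.arrow (fcpsTr μβ) (fcpsTy β)))) :=
  ⟨fun n Γ e τ e' h => (sel_main.1 n Γ e τ e' h).1,
   fun n Γ e τ μα α μβ β e' h => (sel_main.2 n Γ e τ μα α μβ β e' h).1⟩

end LambdaF
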